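/- Let X be a minimum zero forcing set of G, let u₁,…,u_k be terminals of k distinct forcing chains associated with X (for some chronological list of forces), and let H₁,…,H_k be pairwise disjoint connected graphs with V(H_i) ∩ V(G) = {u_i}. Let G' = G ∪ H₁ ∪ ⋯ ∪ H_k. Then Z(G';X) = |X| − k + Σᵢ Z(H_i;{u_i}). -/

import Mathlib

namespace RPD

variable {V : Type*}

/-- The closed neighborhood of a set of vertices. -/
def closedNbhd (G : SimpleGraph V) (S : Set V) : Set V :=
  S ∪ {v | ∃ u ∈ S, G.Adj u v}

/-- The zero forcing closure: `ZFC G B v` means `v` eventually gets colored when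
starting from the blue set `B` and repeatedly applying the color change rule
(a colored vertex with exactly one uncolored neighbor colors that neighbor). -/
inductive ZFC (G : SimpleGraph V) (B : Set V) : V → Prop
  | init (v : V) (hv : v ∈ B) : ZFC G B v
  | force (u w : V) (hu : ZFC G B u) (hadj : G.Adj u w)
      (hothers : ∀ x, G.Adj u x → x ≠ w → ZFC G B x) : ZFC G B w

/-- `B` is a zero forcing set of `G`. -/
def IsZFS (G : SimpleGraph V) (B : Set V) : Prop := ∀ v, ZFC G B v

/-- `S` is a power dominating set of `G`: its closed neighborhood is a zero forcing set. -/
def IsPDS (G : SimpleGraph V) (S : Set V) : Prop := IsZFS G (closedNbhd G S)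

/-- The restricted zero forcing number `Z(G;X)`; `Z(G) = zNum G ∅`. -/
noncomputable def zNum (G : SimpleGraph V) (X : Set V) : ℕ :=
  sInf {n | ∃ B : Set V, X ⊆ B ∧ IsZFS G B ∧ B.ncard = n}

/-- The restricted power domination number `γ_P(G;X)`; `γ_P(G) = pdNum G ∅`. -/
noncomputable def pdNum (G : SimpleGraph V) (X : Set V) : ℕ :=
  sInf {n | ∃ S : Set V, X ⊆ S ∧ IsPDS G S ∧ S.ncard = n}

/-- A leaf is a vertex of degree one, i.e. whose neighbor set is a singleton. -/
def IsLeaf (G : SimpleGraph V) (l : V) : Prop := ∃ u, G.neighborSet l = {u}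

end RPD

open RPD

namespace RPD

variable {V : Type*}

/-- `Forces G B u w` : with blue set `B`, vertex `u` can force `w`
(`u` blue, `w` its unique white neighbor). -/
def Forces (G : SimpleGraph V) (B : Set V) (u w : V) : Prop :=
  u ∈ B ∧ w ∉ B ∧ G.Adj u w ∧ ∀ x, G.Adj u x → x ≠ w → x ∈ B

/-- `IsChrono G B L` : `L` is a valid chronological list of forces starting
from the blue set `B`. -/
def IsChrono (G : SimpleGraph V) : Set V → List (V × V) → Prop
  | _, [] => True
  | B, p :: L => Forces G B p.1 p.2 ∧ IsChrono G (insert p.2 B) L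

/-- The set of blue vertices after performing the forces in `L` starting from `B`. -/
def runList (G : SimpleGraph V) (B : Set V) (L : List (V × V)) : Set V :=
  L.foldl (fun C p => insert p.2 C) B

end RPD

namespace RPD

variable {V : Type*}

lemma ZFC.mono {G : SimpleGraph V} {B C : Set V} (hBC : B ⊆ C) {v : V}
    (h : ZFC G B v) : ZFC G C v := by
  induction h with
  | init v hv => exact .init v (hBC hv)
  | force u w hu hadj hothers ihu ihoth => exact .force u w ihu hadj (fun x hx hne => ihoth x hx hne)

lemma zNum_le [Finite V] (G : SimpleGraph V) (X B : Set V) (hXB : X ⊆ B)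
    (hB : IsZFS G B) : zNum G X ≤ B.ncard :=
  Nat.sInf_le ⟨B, hXB, hB, rfl⟩

lemma zNum_spec [Finite V] (G : SimpleGraph V) (X : Set V) :
    ∃ B, X ⊆ B ∧ IsZFS G B ∧ B.ncard = zNum G X := by
  have hne : {n | ∃ B : Set V, X ⊆ B ∧ IsZFS G B ∧ B.ncard = n}.Nonempty :=
    ⟨(Set.univ : Set V).ncard, Set.univ, Set.subset_univ _, fun v => .init v trivial, rfl⟩
  exact Nat.sInf_mem hne

lemma sum_ncard_le_ncard_iUnion {α : Type*} [Finite α] :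
    ∀ {k : ℕ} (S : Fin k → Set α), (∀ i j, i ≠ j → Disjoint (S i) (S j)) →
      ∑ i, (S i).ncard ≤ (⋃ i, S i).ncard := by
  intro k
  induction k with
  | zero => intro S _; simp
  | succ n ih =>
    intro S hd
    have hU : (⋃ i, S i) = S 0 ∪ ⋃ i : Fin n, S i.succ := by
      ext x; simp [Fin.exists_fin_succ]
    rw [hU, Fin.sum_univ_succ,
      Set.ncard_union_eq (Set.disjoint_iUnion_right.2 fun i =>
        hd 0 i.succ (Fin.succ_ne_zero i).symm) (Set.toFinite _) (Set.toFinite _)]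
    exact Nat.add_le_add le_rfl (ih (fun i => S i.succ)
      (fun i j hij => hd i.succ j.succ (fun h => hij (Fin.succ_injective _ h))))

lemma ncard_iUnion_le {α : Type*} :
    ∀ {k : ℕ} (S : Fin k → Set α), (⋃ i, S i).ncard ≤ ∑ i, (S i).ncard := by
  intro k
  induction k with
  | zero => intro S; simp
  | succ n ih =>
    intro S
    have hU : (⋃ i, S i) = S 0 ∪ ⋃ i : Fin n, S i.succ := by
      ext x; simp [Fin.exists_fin_succ]
    rw [hU, Fin.sum_univ_succ]
    exact le_trans (Set.ncard_union_le _ _) (Nat.add_le_add le_rfl (ih _))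

end RPD

/-- Proposition 4.6: a terminal of a forcing chain of a chronological list of forces
is exactly a vertex that performs no force in the list; `u i` are the terminals of `k`
distinct forcing chains (distinctness is forced by the disjointness of the `W i`). -/
theorem stmt19 {V' : Type*} [Finite V'] (G' : SimpleGraph V') (k : ℕ)
    (Vg : Set V') (W : Fin k → Set V') (u : Fin k → V')
    (hcover : Vg ∪ (⋃ i, W i) = Set.univ)
    (hWdisj : ∀ i j, i ≠ j → W i ∩ W j = ∅)
    (hWVg : ∀ i, W i ∩ Vg = {u i})
    (hconn : ∀ i, (G'.induce (W i)).Connected)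
    (hedges : ∀ a b, G'.Adj a b → (a ∈ Vg ∧ b ∈ Vg) ∨ ∃ i, a ∈ W i ∧ b ∈ W i)
    (X : Set V') (hXV : X ⊆ Vg)
    (hX : IsZFS (G'.induce Vg) (Subtype.val ⁻¹' X))
    (hmin : X.ncard = zNum (G'.induce Vg) ∅)
    (L : List (↥Vg × ↥Vg))
    (hchrono : IsChrono (G'.induce Vg) (Subtype.val ⁻¹' X) L)
    (hall : runList (G'.induce Vg) (Subtype.val ⁻¹' X) L = Set.univ)
    (hterm : ∀ i, ∀ p ∈ L, ((p.1 : ↥Vg) : V') ≠ u i) :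
    zNum G' X + k =
      X.ncard + ∑ i : Fin k, zNum (G'.induce (W i)) (Subtype.val ⁻¹' {u i}) := by
  classical
  have huWVg : ∀ i, u i ∈ W i ∩ Vg := fun i => by rw [hWVg i]; rfl
  have huW : ∀ i, u i ∈ W i := fun i => (huWVg i).1
  have huVg : ∀ i, u i ∈ Vg := fun i => (huWVg i).2
  have hmemW : ∀ i, ∀ v ∈ W i, v ∈ Vg → v = u i := by
    intro i v hv hvg
    have h : v ∈ W i ∩ Vg := ⟨hv, hvg⟩
    rw [hWVg i] at h; exact h
  have hWW : ∀ i j, ∀ v : V', v ∈ W i → v ∈ W j → i = j := by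
    intro i j v hi hj
    by_contra h
    have h2 : v ∈ W i ∩ W j := ⟨hi, hj⟩
    rw [hWdisj i j h] at h2
    exact h2
  set Z : Fin k → ℕ := fun i => zNum (G'.induce (W i)) (Subtype.val ⁻¹' {u i}) with hZ
  refine le_antisymm ?_ ?_
  · -- upper bound
    choose Bi hBi1 hBi2 hBi3 using
      fun i => zNum_spec (G'.induce (W i)) (Subtype.val ⁻¹' {u i})
    set D : Fin k → Set V' := fun i =>
      Subtype.val '' (Bi i \ {(⟨u i, huW i⟩ : ↥(W i))}) with hD
    set B : Set V' := X ∪ ⋃ i, D i with hB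
    have hXB : X ⊆ B := Set.subset_union_left
    have claim1 : ∀ v : ↥Vg, ZFC G' B ↑v := by
      suffices h : ∀ (L' : List (↥Vg × ↥Vg)) (C : Set ↥Vg),
          IsChrono (G'.induce Vg) C L' →
          (∀ i, ∀ p ∈ L', ((p.1 : ↥Vg) : V') ≠ u i) →
          (∀ v : ↥Vg, v ∈ C → ZFC G' B ↑v) →
          ∀ v : ↥Vg, v ∈ runList (G'.induce Vg) C L' → ZFC G' B ↑v by
        intro v
        exact h L _ hchrono hterm (fun w hw => .init _ (hXB hw)) v (by rw [hall]; trivial)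
      intro L'
      induction L' with
      | nil => intro C _ _ hC v hv; exact hC v hv
      | cons p T ih =>
        intro C hchr hterm' hC v hv
        obtain ⟨hf, hchr'⟩ := hchr
        have hp2 : ZFC G' B ↑p.2 := by
          have hadj' : G'.Adj ↑p.1 ↑p.2 := hf.2.2.1
          refine ZFC.force (G := G') ↑p.1 ↑p.2 (hC _ hf.1) hadj' ?_
          intro x hx hne
          rcases hedges _ _ hx with ⟨_, hxVg⟩ | ⟨i, hp1W, hxW⟩
          · refine hC ⟨x, hxVg⟩ (hf.2.2.2 ⟨x, hxVg⟩ hx ?_)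
            intro h
            exact hne (by rw [← h])
          · exact absurd (hmemW i _ hp1W p.1.2) (hterm' i p List.mem_cons_self)
        refine ih (insert p.2 C) hchr'
          (fun i q hq => hterm' i q (List.mem_cons_of_mem _ hq)) ?_ v hv
        intro w hw
        rcases Set.mem_insert_iff.1 hw with hw | hw
        · exact hw ▸ hp2
        · exact hC w hw
    have claim2 : ∀ i (w : ↥(W i)), ZFC (G'.induce (W i)) (Bi i) w → ZFC G' B ↑w := by
      intro i w hw
      induction hw with
      | init w hwB =>
        by_cases h : (w : V') = u i
        · exact h ▸ claim1 ⟨u i, huVg i⟩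
        · refine ZFC.init _ (Set.mem_union_right _ (Set.mem_iUnion.2 ⟨i, ?_⟩))
          exact ⟨w, ⟨hwB, fun he => h (by rw [he])⟩, rfl⟩
      | force a w ha hadj hoth iha ihoth =>
        have hadj' : G'.Adj ↑a ↑w := hadj
        refine ZFC.force (G := G') ↑a ↑w iha hadj' ?_
        intro x hx hne
        by_cases hxW : x ∈ W i
        · exact ihoth ⟨x, hxW⟩ hx (fun h => hne (congrArg Subtype.val h))
        · rcases hedges _ _ hx with ⟨haVg, hxVg⟩ | ⟨j, hja, hjx⟩
          · exact claim1 ⟨x, hxVg⟩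
          · have hij := hWW i j ↑a a.2 hja
            subst hij
            exact absurd hjx hxW
    have hBzfs : IsZFS G' B := by
      intro v
      have hv : v ∈ Vg ∪ ⋃ i, W i := hcover ▸ Set.mem_univ v
      rcases hv with h | h
      · exact claim1 ⟨v, h⟩
      · obtain ⟨i, hi⟩ := Set.mem_iUnion.1 h
        exact claim2 i ⟨v, hi⟩ (hBi2 i ⟨v, hi⟩)
    have hZle : zNum G' X ≤ B.ncard := zNum_le _ _ _ hXB hBzfs
    have hDcard : ∀ i, (D i).ncard = Z i - 1 := by
      intro i
      rw [hD]
      rw [Set.ncard_image_of_injective _ Subtype.val_injective,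
        Set.ncard_diff_singleton_of_mem (hBi1 i rfl : (⟨u i, huW i⟩ : ↥(W i)) ∈ Bi i), hBi3]
    have hZpos : ∀ i, 1 ≤ Z i := by
      intro i
      have h1 : (⟨u i, huW i⟩ : ↥(W i)) ∈ Bi i := hBi1 i rfl
      have h2 := (Set.ncard_pos (Set.toFinite _)).2 ⟨_, h1⟩
      rw [hBi3] at h2
      exact h2
    have hBcard : B.ncard ≤ X.ncard + ∑ i, (Z i - 1) := by
      calc B.ncard ≤ X.ncard + (⋃ i, D i).ncard := Set.ncard_union_le _ _
        _ ≤ X.ncard + ∑ i, (D i).ncard :=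
            Nat.add_le_add le_rfl (ncard_iUnion_le D)
        _ = X.ncard + ∑ i, (Z i - 1) := by
            congr 1; exact Finset.sum_congr rfl (fun i _ => hDcard i)
    calc zNum G' X + k ≤ (X.ncard + ∑ i, (Z i - 1)) + k :=
          Nat.add_le_add (hZle.trans hBcard) le_rfl
      _ = X.ncard + ∑ i, Z i := by
          rw [add_assoc]
          congr 1
          have h1 : ∑ i, Z i = ∑ i, ((Z i - 1) + 1) :=
            Finset.sum_congr rfl (fun i _ => (Nat.sub_add_cancel (hZpos i)).symm)
          rw [h1, Finset.sum_add_distrib]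
          simp
  · -- lower bound
    obtain ⟨B, hXB, hBzfs, hBcard⟩ := zNum_spec G' X
    set S : Fin k → Set V' := fun i => W i ∩ (B \ {u i}) with hS
    have hZile : ∀ i, Z i ≤ (S i).ncard + 1 := by
      intro i
      set Ci : Set ↥(W i) :=
        insert (⟨u i, huW i⟩ : ↥(W i)) (Subtype.val ⁻¹' (B \ {u i})) with hCi
      have key : ∀ v : V', ZFC G' B v → ∀ hv : v ∈ W i,
          ZFC (G'.induce (W i)) Ci ⟨v, hv⟩ := by
        intro v hv
        induction hv with
        | init v hvB =>
          intro hvW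
          by_cases h : v = u i
          · exact .init _ (Set.mem_insert_iff.2 (Or.inl (Subtype.ext h)))
          · exact .init _ (Set.mem_insert_iff.2 (Or.inr ⟨hvB, h⟩))
        | force a w ha hadj hoth iha ihoth =>
          intro hwW
          by_cases hw : w = u i
          · exact .init _ (Set.mem_insert_iff.2 (Or.inl (Subtype.ext hw)))
          · have hwVg : w ∉ Vg := fun h => hw (hmemW i w hwW h)
            have haW : a ∈ W i := by
              rcases hedges a w hadj with ⟨_, h2⟩ | ⟨j, hja, hjw⟩
              · exact absurd h2 hwVg
              · have hij := hWW i j w hwW hjw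
                subst hij
                exact hja
            refine ZFC.force (⟨a, haW⟩ : ↥(W i)) ⟨w, hwW⟩ ?_ hadj ?_
            · by_cases hua : a = u i
              · exact .init _ (Set.mem_insert_iff.2 (Or.inl (Subtype.ext hua)))
              · exact iha haW
            · intro x hx hne
              exact ihoth ↑x hx (fun h => hne (Subtype.ext h)) x.2
      have hCzfs : IsZFS (G'.induce (W i)) Ci := by
        intro w
        have := key ↑w (hBzfs ↑w) w.2
        exact this
      have hsubCi : Subtype.val ⁻¹' {u i} ⊆ Ci := by
        intro x hx
        exact Set.mem_insert_iff.2 (Or.inl (Subtype.ext hx))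
      have h1 : Z i ≤ Ci.ncard := zNum_le _ _ _ hsubCi hCzfs
      have h2 : Ci.ncard ≤ (Subtype.val ⁻¹' (B \ {u i}) : Set ↥(W i)).ncard + 1 :=
        Set.ncard_insert_le _ _
      have h3 : (Subtype.val ⁻¹' (B \ {u i}) : Set ↥(W i)).ncard = (S i).ncard := by
        rw [← Set.ncard_image_of_injective _ Subtype.val_injective,
          Subtype.image_preimage_coe]
      omega
    have hSdisj : ∀ i j, i ≠ j → Disjoint (S i) (S j) := by
      intro i j hij
      refine Set.disjoint_left.2 ?_
      intro v hvi hvj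
      exact hij (hWW i j v hvi.1 hvj.1)
    have hXd : Disjoint (B ∩ Vg) (⋃ i, S i) := by
      refine Set.disjoint_left.2 ?_
      intro v hv hv2
      obtain ⟨i, hi⟩ := Set.mem_iUnion.1 hv2
      exact hi.2.2 (hmemW i v hi.1 hv.2)
    have hsum : X.ncard + ∑ i, (S i).ncard ≤ B.ncard := by
      have h1 : X.ncard ≤ (B ∩ Vg).ncard :=
        Set.ncard_le_ncard (fun x hx => ⟨hXB hx, hXV hx⟩) (Set.toFinite _)
      have h2 : ∑ i, (S i).ncard ≤ (⋃ i, S i).ncard :=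
        sum_ncard_le_ncard_iUnion S hSdisj
      have h3 : ((B ∩ Vg) ∪ ⋃ i, S i).ncard = (B ∩ Vg).ncard + (⋃ i, S i).ncard :=
        Set.ncard_union_eq hXd (Set.toFinite _) (Set.toFinite _)
      have h4 : ((B ∩ Vg) ∪ ⋃ i, S i).ncard ≤ B.ncard := by
        refine Set.ncard_le_ncard ?_ (Set.toFinite _)
        intro v hv
        rcases hv with hv | hv
        · exact hv.1
        · obtain ⟨i, hi⟩ := Set.mem_iUnion.1 hv
          exact hi.2.1
      omega
    have hZsum : ∑ i, Z i ≤ ∑ i, (S i).ncard + k := by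
      have h1 : ∑ i, Z i ≤ ∑ i, ((S i).ncard + 1) :=
        Finset.sum_le_sum (fun i _ => hZile i)
      rw [Finset.sum_add_distrib] at h1
      simpa using h1
    have hZB : zNum G' X = B.ncard := hBcard.symm
    have heta : Finset.univ.sum Z = ∑ i, Z i := rfl
    omega
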